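/- Let M be an algorithm that learns the class of deterministic (2n+3)-OREs in the limit from positive data, let A = {a₁,…,aₙ} with n ≥ 3 distinct letters, and let r₁ = (a₁a₂ + a₃ + ⋯ + aₙ)⁺. Then every characteristic sample S for r₁ must contain all non-empty words of length at most n over B = A ∖ {a₁,a₂}; hence |S| ≥ Σ_{i=1}^{n} (n−2)^i. -/

import Mathlib

open Computability

/-- Regular expressions (with explicit parentheses) built from ∅, ε, letters,
concatenation, union, optional `?` and one-or-more `⁺`. -/
inductive PRE (α : Type) where
  | empty : PRE α
  | eps : PRE α
  | char : α → PRE α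
  | paren : PRE α → PRE α
  | cat : PRE α → PRE α → PRE α
  | alt : PRE α → PRE α → PRE α
  | opt : PRE α → PRE α
  | pos : PRE α → PRE α

/-- The language of a regular expression. -/
def PRE.lang {α : Type} : PRE α → Language α
  | .empty => 0
  | .eps => 1
  | .char a => {[a]}
  | .paren r => r.lang
  | .cat r s => r.lang * s.lang
  | .alt r s => r.lang + s.lang
  | .opt r => r.lang + 1
  | .pos r => r.lang * (r.lang)∗

/-- Replace the i-th occurrence of each letter `a` by the marked symbol `(a, i)`,
threading occurrence counters. -/
def PRE.markAux {α : Type} [DecidableEq α] : PRE α → (α → ℕ) → PRE (α × ℕ) × (α → ℕ)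
  | .empty, c => (.empty, c)
  | .eps, c => (.eps, c)
  | .char a, c => (.char (a, c a + 1), fun b => if b = a then c a + 1 else c b)
  | .paren r, c => let p := r.markAux c; (.paren p.1, p.2)
  | .cat r s, c => let p := r.markAux c; let q := s.markAux p.2; (.cat p.1 q.1, q.2)
  | .alt r s, c => let p := r.markAux c; let q := s.markAux p.2; (.alt p.1 q.1, q.2)
  | .opt r, c => let p := r.markAux c; (.opt p.1, p.2)
  | .pos r, c => let p := r.markAux c; (.pos p.1, p.2)

/-- The marked version r̄ of a regular expression. -/
def PRE.mark {α : Type} [DecidableEq α] (r : PRE α) : PRE (α × ℕ) :=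
  (r.markAux fun _ => 0).1

/-- A regular expression is deterministic (one-unambiguous) if its marked version
admits no two words w·a⁽ⁱ⁾·v and w·a⁽ʲ⁾·v′ with i ≠ j. -/
def PRE.Deterministic {α : Type} [DecidableEq α] (r : PRE α) : Prop :=
  ∀ (w v v' : List (α × ℕ)) (a : α) (i j : ℕ),
    w ++ (a, i) :: v ∈ r.mark.lang → w ++ (a, j) :: v' ∈ r.mark.lang → i = j

/-- Number of occurrences of the letter `a` in `r`. -/
def PRE.rep {α : Type} [DecidableEq α] : PRE α → α → ℕ
  | .empty, _ => 0
  | .eps, _ => 0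
  | .char b, a => if b = a then 1 else 0
  | .paren r, a => r.rep a
  | .cat r s, a => r.rep a + s.rep a
  | .alt r s, a => r.rep a + s.rep a
  | .opt r, a => r.rep a
  | .pos r, a => r.rep a

/-- `r` is a k-occurrence regular expression: every letter occurs at most `k` times. -/
def PRE.IsKORE {α : Type} [DecidableEq α] (k : ℕ) (r : PRE α) : Prop :=
  ∀ a, r.rep a ≤ k

/-- Length of the string representation (letters, ∅, ε, operators ·, +, ?, ⁺ and
parentheses each count as one character). -/
def PRE.len {α : Type} : PRE α → ℕ
  | .empty => 1
  | .eps => 1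
  | .char _ => 1
  | .paren r => r.len + 2
  | .cat r s => r.len + s.len + 1
  | .alt r s => r.len + s.len + 1
  | .opt r => r.len + 1
  | .pos r => r.len + 1

/-- `M` learns the class `R` in the limit from positive data: it is sound
(`S ⊆ L(M S)` for every sample `S`) and complete (every `r ∈ R` has a
characteristic sample `S_r ⊆ L(r)` such that `M S` is equivalent to `r`
whenever `S_r ⊆ S ⊆ L(r)`). -/
def Learns {α : Type} (M : Finset (List α) → PRE α) (R : Set (PRE α)) : Prop :=
  (∀ S : Finset (List α), ∀ w ∈ S, w ∈ (M S).lang) ∧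
  ∀ r ∈ R, ∃ Sr : Finset (List α), (∀ w ∈ Sr, w ∈ r.lang) ∧
    ∀ S : Finset (List α), Sr ⊆ S → (∀ w ∈ S, w ∈ r.lang) → (M S).lang = r.lang

/-- Disjunction of the letters in a list. -/
def bigAlt {n : ℕ} : List (Fin n) → PRE (Fin n)
  | [] => .empty
  | [x] => .char x
  | x :: y :: xs => .alt (.char x) (bigAlt (y :: xs))

/-- The list of letters of B = A ∖ {a₁, a₂} (letters a₃, …, aₙ). -/
def Blist (n : ℕ) : List (Fin n) := (List.finRange n).drop 2

/-- The expression a₁a₂ + a₃ + ⋯ + aₙ. -/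
def coreRE (n : ℕ) (h : 2 ≤ n) : PRE (Fin n) :=
  .alt (.cat (.char ⟨0, by omega⟩) (.char ⟨1, by omega⟩)) (bigAlt (Blist n))

/-- The expression r₁ = (a₁a₂ + a₃ + ⋯ + aₙ)⁺. -/
def r1 (n : ℕ) (h : 2 ≤ n) : PRE (Fin n) := .pos (coreRE n h)

/-- r_wⁱ = (a₁a₂ + (B ∖ {b}))·(a₁a₂ + a₃ + ⋯ + aₙ)*, accepting all words of L(r₁)
that do not start with b.  (Here s* abbreviates (s⁺)?.) -/
def rwi (n : ℕ) (h : 2 ≤ n) (b : Fin n) : PRE (Fin n) :=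
  .cat (.alt (.cat (.char ⟨0, by omega⟩) (.char ⟨1, by omega⟩))
          (bigAlt ((Blist n).filter (· ≠ b))))
    (.opt (.pos (coreRE n h)))

/-- The nested tail Y of the expression r_w:
Y(b_i ⋯ b_m) = ε + r_wⁱ + bᵢ·Y(b_{i+1} ⋯ b_m), with Y(ε) = r₁. -/
def rexclTail (n : ℕ) (h : 2 ≤ n) : List (Fin n) → PRE (Fin n)
  | [] => r1 n h
  | b :: rest => .alt .eps (.alt (rwi n h b) (.cat (.char b) (rexclTail n h rest)))

/-- The expression r_w = r_w¹ + b₁(ε + r_w² + b₂(⋯ + b_m·r₁ ⋯)) for w = b₁ ⋯ b_m. -/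
def rexcl (n : ℕ) (h : 2 ≤ n) : List (Fin n) → PRE (Fin n)
  | [] => .empty
  | b :: rest => .alt (rwi n h b) (.cat (.char b) (rexclTail n h rest))

namespace Stmt9Aux

variable {α : Type}

lemma lmem_singleton_iff {β : Type} {w x : List β} : w ∈ ({x} : Language β) ↔ w = x :=
  Iff.rfl

/-! ### Generic determinism infrastructure on languages of marked words -/

/-- Determinism property of a language of marked words. -/
def detL (L : Language (α × ℕ)) : Prop :=
  ∀ (w v v' : List (α × ℕ)) (a : α) (i j : ℕ),
    w ++ (a, i) :: v ∈ L → w ++ (a, j) :: v' ∈ L → i = j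

/-- Possible first symbols. -/
def FirstL (L : Language (α × ℕ)) : Set (α × ℕ) := {x | ∃ v, x :: v ∈ L}

/-- Symbols that can follow a complete word of `L` inside `L`. -/
def FLastL (L : Language (α × ℕ)) : Set (α × ℕ) :=
  {x | ∃ u v, u ∈ L ∧ u ++ x :: v ∈ L}

lemma detL_one : detL (1 : Language (α × ℕ)) := by
  intro w v v' a i j h _
  rw [Language.mem_one] at h
  simp at h

lemma FirstL_one : FirstL (1 : Language (α × ℕ)) = ∅ := by
  ext x
  simp only [FirstL, Set.mem_setOf_eq, Set.mem_empty_iff_false, iff_false, not_exists]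
  intro v hv
  rw [Language.mem_one] at hv
  simp at hv

lemma detL_singleton (s : α × ℕ) : detL ({[s]} : Language (α × ℕ)) := by
  intro w v v' a i j h h'
  rw [lmem_singleton_iff] at h h'
  cases w with
  | nil =>
    simp only [List.nil_append] at h h'
    rw [← h'] at h
    exact (List.cons.injEq _ _ _ _).mp h |>.1 |> (fun hh => (Prod.mk.injEq _ _ _ _).mp hh |>.2)
  | cons s t => simp_all

lemma FLastL_singleton (s : α × ℕ) : FLastL ({[s]} : Language (α × ℕ)) = ∅ := by
  ext x
  simp only [FLastL, Set.mem_setOf_eq, Set.mem_empty_iff_false, iff_false, not_exists]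
  rintro u v ⟨hu, hv⟩
  rw [lmem_singleton_iff] at hu hv
  subst hu
  simp at hv

lemma detL_add {L1 L2 : Language (α × ℕ)} (h1 : detL L1) (h2 : detL L2)
    (hd : ∀ x ∈ FirstL L1, ∀ y ∈ FirstL L2, x.1 ≠ y.1) :
    detL (L1 + L2) := by
  have key : ∀ (w v v' : List (α × ℕ)) (a : α) (i j : ℕ),
      w ++ (a, i) :: v ∈ L1 → w ++ (a, j) :: v' ∈ L2 → False := by
    intro w v v' a i j hx hy
    cases w with
    | nil => exact hd (a, i) ⟨v, hx⟩ (a, j) ⟨v', hy⟩ rfl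
    | cons s t =>
        exact hd s ⟨t ++ (a, i) :: v, by simpa using hx⟩
          s ⟨t ++ (a, j) :: v', by simpa using hy⟩ rfl
  intro w v v' a i j hx hy
  rw [Language.mem_add] at hx hy
  rcases hx with hx | hx <;> rcases hy with hy | hy
  · exact h1 w v v' a i j hx hy
  · exact absurd (key w v v' a i j hx hy) (by simp)
  · exact absurd (key w v' v a j i hy hx) (by simp)
  · exact h2 w v v' a i j hx hy

/-- Splitting a decomposition of a concatenation at a distinguished symbol. -/
lemma split_cases {p v x1 x2 : List (α × ℕ)} {s : α × ℕ}
    (h : x1 ++ x2 = p ++ s :: v) :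
    (∃ t, x1 = p ++ s :: t) ∨ (∃ p2, p = x1 ++ p2 ∧ x2 = p2 ++ s :: v) := by
  rcases le_or_gt x1.length p.length with hle | hlt
  · have hx1 : x1 <+: p :=
      List.prefix_of_prefix_length_le ⟨x2, h⟩ ⟨s :: v, rfl⟩ hle
    obtain ⟨p2, rfl⟩ := hx1
    right
    refine ⟨p2, rfl, ?_⟩
    rw [List.append_assoc] at h
    exact (List.append_cancel_left h)
  · have hpre : p ++ [s] <+: x1 := by
      refine List.prefix_of_prefix_length_le ⟨v, by simp⟩ ⟨x2, h⟩ ?_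
      simp only [List.length_append, List.length_cons, List.length_nil]
      omega
    obtain ⟨t, ht⟩ := hpre
    left
    refine ⟨t, ?_⟩
    rw [← ht, List.append_assoc]
    rfl

lemma detL_mul {L1 L2 : Language (α × ℕ)} (h0 : [] ∉ L1) (h1 : detL L1) (h2 : detL L2)
    (hf : ∀ x ∈ FLastL L1, ∀ y ∈ FirstL L2, x.1 ≠ y.1) :
    detL (L1 * L2) := by
  -- key: one word continues inside L1 past a completed L1-word of the other
  have key : ∀ (v v' p2 : List (α × ℕ)) (a : α) (i j : ℕ)
      (x1 y1 y2 : List (α × ℕ)), x1 ∈ L1 → y1 ∈ L1 → y2 ∈ L2 →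
      x1 = (y1 ++ p2) ++ (a, i) :: v → y2 = p2 ++ (a, j) :: v' → False := by
    intro v v' p2 a i j x1 y1 y2 hx1 hy1 hy2 hxe hye
    rw [hxe] at hx1
    rw [hye] at hy2
    cases p2 with
    | nil =>
      have hfl : (a, i) ∈ FLastL L1 := ⟨y1, v, hy1, by simpa using hx1⟩
      have hfr : (a, j) ∈ FirstL L2 := ⟨v', by simpa using hy2⟩
      exact hf _ hfl _ hfr rfl
    | cons s p2' =>
      have hfl : s ∈ FLastL L1 :=
        ⟨y1, p2' ++ (a, i) :: v, hy1, by simpa using hx1⟩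
      have hfr : s ∈ FirstL L2 := ⟨p2' ++ (a, j) :: v', by simpa using hy2⟩
      exact hf _ hfl _ hfr rfl
  intro p v v' a i j hx hy
  rw [Language.mem_mul] at hx hy
  obtain ⟨x1, hx1, x2, hx2, hxe⟩ := hx
  obtain ⟨y1, hy1, y2, hy2, hye⟩ := hy
  rcases split_cases hxe with ⟨t, hxt⟩ | ⟨p2, hpe, hx2e⟩ <;>
    rcases split_cases hye with ⟨t', hyt⟩ | ⟨q2, hqe, hy2e⟩
  · -- both split inside the L1-part
    exact h1 p t t' a i j (by rw [← hxt]; exact hx1) (by rw [← hyt]; exact hy1)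
  · -- x continues in L1, y has completed y1
    exact absurd (key t v' q2 a i j x1 y1 y2 hx1 hy1 hy2
      (by rw [hxt, hqe]) hy2e) (by simp)
  · exact absurd (key t' v p2 a j i y1 x1 x2 hy1 hx1 hx2
      (by rw [hyt, hpe]) hx2e) (by simp)
  · -- both have completed their L1-word
    rcases lt_trichotomy x1.length y1.length with hlt | heq | hgt
    · exfalso
      have hxy : x1 <+: y1 :=
        List.prefix_of_prefix_length_le ⟨p2, hpe.symm⟩ ⟨q2, hqe.symm⟩ (le_of_lt hlt)
      obtain ⟨z, hz⟩ := hxy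
      cases z with
      | nil => rw [← hz] at hlt; simp at hlt
      | cons s z' =>
        have hfl : s ∈ FLastL L1 := ⟨x1, z', hx1, by rw [hz]; exact hy1⟩
        have hfr : s ∈ FirstL L2 := by
          have h' : x1 ++ p2 = x1 ++ (s :: z') ++ q2 := by
            rw [← hpe, hz, ← hqe]
          rw [List.append_assoc] at h'
          have hp2 : p2 = (s :: z') ++ q2 := List.append_cancel_left h'
          refine ⟨z' ++ q2 ++ (a, i) :: v, ?_⟩
          rw [hx2e, hp2] at hx2
          simpa using hx2
        exact hf _ hfl _ hfr rfl
    · have hxy : x1 <+: y1 :=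
        List.prefix_of_prefix_length_le ⟨p2, hpe.symm⟩ ⟨q2, hqe.symm⟩ (le_of_eq heq)
      have hx1y1 : x1 = y1 := List.IsPrefix.eq_of_length hxy heq
      subst hx1y1
      have hq : p2 = q2 := List.append_cancel_left (hpe.symm.trans hqe)
      subst hq
      exact h2 p2 v v' a i j (by rw [← hx2e]; exact hx2) (by rw [← hy2e]; exact hy2)
    · exfalso
      have hxy : y1 <+: x1 :=
        List.prefix_of_prefix_length_le ⟨q2, hqe.symm⟩ ⟨p2, hpe.symm⟩ (le_of_lt hgt)
      obtain ⟨z, hz⟩ := hxy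
      cases z with
      | nil => rw [← hz] at hgt; simp at hgt
      | cons s z' =>
        have hfl : s ∈ FLastL L1 := ⟨y1, z', hy1, by rw [hz]; exact hx1⟩
        have hfr : s ∈ FirstL L2 := by
          have h' : y1 ++ q2 = y1 ++ (s :: z') ++ p2 := by
            rw [← hqe, hz, ← hpe]
          rw [List.append_assoc] at h'
          have hq2 : q2 = (s :: z') ++ p2 := List.append_cancel_left h'
          refine ⟨z' ++ p2 ++ (a, j) :: v', ?_⟩
          rw [hy2e, hq2] at hy2
          simpa using hy2
        exact hf _ hfl _ hfr rfl

/-! ### Index-function languages -/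

/-- All symbols occurring in words of `L` have their index determined by the letter. -/
def IdxFun (L : Language (α × ℕ)) (f : α → ℕ) : Prop :=
  ∀ w ∈ L, ∀ a i, (a, i) ∈ w → i = f a

lemma IdxFun.toDetL {L : Language (α × ℕ)} {f : α → ℕ} (h : IdxFun L f) : detL L := by
  intro w v v' a i j hx hy
  have hi := h _ hx a i (by simp)
  have hj := h _ hy a j (by simp)
  rw [hi, hj]

lemma IdxFun.add {L1 L2 : Language (α × ℕ)} {f} (h1 : IdxFun L1 f) (h2 : IdxFun L2 f) :
    IdxFun (L1 + L2) f := by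
  intro w hw a i hai
  rw [Language.mem_add] at hw
  rcases hw with hw | hw
  exacts [h1 w hw a i hai, h2 w hw a i hai]

lemma IdxFun.mul {L1 L2 : Language (α × ℕ)} {f} (h1 : IdxFun L1 f) (h2 : IdxFun L2 f) :
    IdxFun (L1 * L2) f := by
  intro w hw a i hai
  rw [Language.mem_mul] at hw
  obtain ⟨u, hu, v, hv, rfl⟩ := hw
  rcases List.mem_append.mp hai with h | h
  exacts [h1 u hu a i h, h2 v hv a i h]

lemma IdxFun.kstar {L : Language (α × ℕ)} {f} (h : IdxFun L f) : IdxFun (L∗) f := by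
  intro w hw a i hai
  rw [Language.mem_kstar] at hw
  obtain ⟨Ls, rfl, hLs⟩ := hw
  obtain ⟨u, hu, hau⟩ := List.mem_flatten.mp hai
  exact h u (hLs u hu) a i hau

lemma IdxFun.one {f : α → ℕ} : IdxFun (1 : Language (α × ℕ)) f := by
  intro w hw a i hai
  rw [Language.mem_one] at hw
  subst hw
  simp at hai

/-! ### Marked shapes of the concrete expressions -/

lemma bigAlt_mark_shape {n : ℕ} : ∀ (l : List (Fin n)) (_ : l.Nodup) (c : Fin n → ℕ)
    (w : List (Fin n × ℕ)), w ∈ ((bigAlt l).markAux c).1.lang →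
    ∃ x ∈ l, w = [(x, c x + 1)] := by
  intro l
  induction l with
  | nil => intro _ c w hw; simp [bigAlt, PRE.markAux, PRE.lang] at hw
  | cons x xs ih =>
    intro hnd c w hw
    cases xs with
    | nil =>
      simp only [bigAlt, PRE.markAux, PRE.lang, Set.mem_singleton_iff] at hw
      exact ⟨x, by simp, hw⟩
    | cons y ys =>
      have hxs : x ∉ (y :: ys) := (List.nodup_cons.mp hnd).1
      rw [show bigAlt (x :: y :: ys) = PRE.alt (.char x) (bigAlt (y :: ys)) from rfl] at hw
      simp only [PRE.markAux] at hw
      rw [show (PRE.alt (PRE.char (x, c x + 1))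
            ((bigAlt (y :: ys)).markAux fun b => if b = x then c x + 1 else c b).1).lang
          = (PRE.char (x, c x + 1)).lang
            + ((bigAlt (y :: ys)).markAux fun b => if b = x then c x + 1 else c b).1.lang
          from rfl, Language.mem_add] at hw
      rcases hw with hw | hw
      · exact ⟨x, by simp, hw⟩
      · obtain ⟨z, hz, hwz⟩ := ih (List.nodup_cons.mp hnd).2 _ w hw
        refine ⟨z, by simp [hz], ?_⟩
        have hzx : z ≠ x := fun hc => hxs (hc ▸ hz)
        simpa [hzx] using hwz

/-! ### Language unfolding lemmas -/

lemma lang_alt {β : Type} (r s : PRE β) : (PRE.alt r s).lang = r.lang + s.lang := rfl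
lemma lang_cat {β : Type} (r s : PRE β) : (PRE.cat r s).lang = r.lang * s.lang := rfl
lemma lang_char {β : Type} (a : β) : (PRE.char a).lang = {[a]} := rfl
lemma lang_opt {β : Type} (r : PRE β) : (PRE.opt r).lang = r.lang + 1 := rfl
lemma lang_pos {β : Type} (r : PRE β) : (PRE.pos r).lang = r.lang * (r.lang)∗ := rfl
lemma lang_eps {β : Type} : (PRE.eps : PRE β).lang = 1 := rfl

lemma FirstL_mul_subset {L1 L2 : Language (α × ℕ)} (h0 : [] ∉ L1) :
    FirstL (L1 * L2) ⊆ FirstL L1 := by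
  rintro s ⟨v, hv⟩
  rw [Language.mem_mul] at hv
  obtain ⟨u, hu, t, _, he⟩ := hv
  cases u with
  | nil => exact absurd hu h0
  | cons a u' =>
    have : a = s := by
      have := congrArg (List.head?) he
      simpa using this
    subst this
    exact ⟨u', hu⟩

lemma FirstL_singleton_mul {s' : α × ℕ} {L2 : Language (α × ℕ)} :
    FirstL (({[s']} : Language (α × ℕ)) * L2) ⊆ {s'} := by
  rintro s ⟨v, hv⟩
  rw [Language.mem_mul] at hv
  obtain ⟨u, hu, t, _, he⟩ := hv
  rw [lmem_singleton_iff] at hu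
  subst hu
  have : s' = s := by
    have := congrArg (List.head?) he
    simpa using this
  simp [this.symm]

/-! ### Facts about `Blist` -/

lemma mem_Blist {n : ℕ} {x : Fin n} : x ∈ Blist n ↔ 2 ≤ x.val := by
  unfold Blist
  rw [List.mem_iff_getElem]
  constructor
  · rintro ⟨i, hi, rfl⟩
    simp
  · intro hx
    have hxn := x.isLt
    refine ⟨x.val - 2, by simp; omega, ?_⟩
    simp only [List.getElem_drop, List.getElem_finRange]
    ext
    simp
    omega

lemma Blist_nodup {n : ℕ} : (Blist n).Nodup :=
  (List.drop_sublist _ _).nodup (List.nodup_finRange n)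

/-! ### Shaped block languages -/

variable {n : ℕ}

/-- The shape of the marked language of `x·y + z₁ + ⋯ + z_k`. -/
def BShape (x y : Fin n) (l : List (Fin n)) (c : Fin n → ℕ)
    (L : Language (Fin n × ℕ)) : Prop :=
  ∀ w ∈ L, w = [(x, c x + 1), (y, c y + 1)] ∨ ∃ z ∈ l, w = [(z, c z + 1)]

lemma block_mark_shape {x y : Fin n} {l : List (Fin n)}
    (hxy : y ≠ x) (hxl : x ∉ l) (hyl : y ∉ l) (hnd : l.Nodup) (c : Fin n → ℕ) :
    BShape x y l c
      ((PRE.alt (.cat (.char x) (.char y)) (bigAlt l)).markAux c).1.lang := by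
  intro w hw
  have hm : ((PRE.alt (.cat (.char x) (.char y)) (bigAlt l)).markAux c).1
      = PRE.alt (.cat (.char (x, c x + 1))
          (.char (y, (if y = x then c x + 1 else c y) + 1)))
          ((bigAlt l).markAux
            (fun b => if b = y then (if y = x then c x + 1 else c y) + 1
              else if b = x then c x + 1 else c b)).1 := rfl
  rw [hm, lang_alt, lang_cat, lang_char, lang_char, Language.mem_add] at hw
  rcases hw with hw | hw
  · left
    rw [Language.mem_mul] at hw
    obtain ⟨u, hu, t, ht, he⟩ := hw
    rw [lmem_singleton_iff] at hu ht
    subst hu; subst ht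
    rw [← he, if_neg hxy]
    rfl
  · right
    obtain ⟨z, hz, hwz⟩ := bigAlt_mark_shape l hnd _ w hw
    refine ⟨z, hz, ?_⟩
    have hzx : z ≠ x := fun hc => hxl (hc ▸ hz)
    have hzy : z ≠ y := fun hc => hyl (hc ▸ hz)
    simpa [hzx, hzy] using hwz

namespace BShape

variable {x y : Fin n} {l : List (Fin n)} {c : Fin n → ℕ} {L : Language (Fin n × ℕ)}

lemma idxFun (h : BShape x y l c L) : IdxFun L (fun a => c a + 1) := by
  intro w hw a i hai
  rcases h w hw with rfl | ⟨z, _, rfl⟩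
  · simp only [List.mem_cons, List.not_mem_nil, or_false] at hai
    rcases hai with h' | h' <;>
    · rw [Prod.mk.injEq] at h'
      obtain ⟨rfl, rfl⟩ := h'
      rfl
  · simp only [List.mem_cons, List.not_mem_nil, or_false] at hai
    rw [Prod.mk.injEq] at hai
    obtain ⟨rfl, rfl⟩ := hai
    rfl

lemma nil_not_mem (h : BShape x y l c L) : [] ∉ L := by
  intro hc
  rcases h [] hc with h' | ⟨z, _, h'⟩ <;> simp at h'

lemma flast (h : BShape x y l c L) (hxl : x ∉ l) : FLastL L = ∅ := by
  ext s
  simp only [FLastL, Set.mem_setOf_eq, Set.mem_empty_iff_false, iff_false, not_exists]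
  rintro u v ⟨hu, huv⟩
  rcases h u hu with rfl | ⟨z, hz, rfl⟩
  · rcases h _ huv with h' | ⟨z', _, h'⟩ <;>
    · have := congrArg List.length h'
      simp at this
  · rcases h _ huv with h' | ⟨z', _, h'⟩
    · have : z = x := by
        have := congrArg (List.head?) h'
        simp at this
        exact this.1
      exact hxl (this ▸ hz)
    · have := congrArg List.length h'
      simp at this
  
lemma first (h : BShape x y l c L) : ∀ s ∈ FirstL L, s.1 = x ∨ s.1 ∈ l := by
  rintro s ⟨v, hv⟩
  rcases h _ hv with h' | ⟨z, hz, h'⟩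
  · left
    have hh := congrArg (List.head?) h'
    simp at hh
    rw [hh]
  · right
    have hh := congrArg (List.head?) h'
    simp at hh
    rw [hh]
    exact hz

end BShape

/-! ### Determinism of the concrete expressions -/

/-- The letter a₁. -/
def A0 (hn : 2 ≤ n) : Fin n := ⟨0, by omega⟩
/-- The letter a₂. -/
def A1 (hn : 2 ≤ n) : Fin n := ⟨1, by omega⟩

lemma A1_ne_A0 (hn : 2 ≤ n) : A1 hn ≠ A0 hn := by
  simp [A0, A1, Fin.ext_iff]

lemma A0_not_mem_Blist (hn : 2 ≤ n) : A0 hn ∉ Blist n := by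
  simp [mem_Blist, A0]

lemma A1_not_mem_Blist (hn : 2 ≤ n) : A1 hn ∉ Blist n := by
  simp [mem_Blist, A1]

lemma coreRE_eq (hn : 2 ≤ n) :
    coreRE n hn = .alt (.cat (.char (A0 hn)) (.char (A1 hn))) (bigAlt (Blist n)) := rfl

lemma core_shape (hn : 2 ≤ n) (c : Fin n → ℕ) :
    BShape (A0 hn) (A1 hn) (Blist n) c ((coreRE n hn).markAux c).1.lang := by
  rw [coreRE_eq]
  exact block_mark_shape (A1_ne_A0 hn) (A0_not_mem_Blist hn) (A1_not_mem_Blist hn)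
    Blist_nodup c

lemma idx_pos_core (hn : 2 ≤ n) (c : Fin n → ℕ) :
    IdxFun (((PRE.pos (coreRE n hn)).markAux c).1.lang) (fun a => c a + 1) := by
  have h := (core_shape hn c).idxFun
  have hm : ((PRE.pos (coreRE n hn)).markAux c).1 = .pos ((coreRE n hn).markAux c).1 := rfl
  rw [hm, lang_pos]
  exact h.mul h.kstar

/-- The first factor of `rwi`. -/
def rwiBL (hn : 2 ≤ n) (b : Fin n) : PRE (Fin n) :=
  .alt (.cat (.char (A0 hn)) (.char (A1 hn))) (bigAlt ((Blist n).filter (· ≠ b)))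

lemma rwi_eq (hn : 2 ≤ n) (b : Fin n) :
    rwi n hn b = .cat (rwiBL hn b) (.opt (.pos (coreRE n hn))) := rfl

lemma rwiBL_shape (hn : 2 ≤ n) (b : Fin n) (c : Fin n → ℕ) :
    BShape (A0 hn) (A1 hn) ((Blist n).filter (· ≠ b)) c
      ((rwiBL hn b).markAux c).1.lang := by
  refine block_mark_shape (A1_ne_A0 hn) ?_ ?_ (Blist_nodup.filter _) c
  · exact fun hc => A0_not_mem_Blist hn (List.mem_of_mem_filter hc)
  · exact fun hc => A1_not_mem_Blist hn (List.mem_of_mem_filter hc)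

lemma A0_not_mem_filter (hn : 2 ≤ n) (b : Fin n) :
    A0 hn ∉ (Blist n).filter (· ≠ b) :=
  fun hc => A0_not_mem_Blist hn (List.mem_of_mem_filter hc)

lemma detL_opt_pos_core (hn : 2 ≤ n) (c : Fin n → ℕ) :
    detL (((PRE.opt (.pos (coreRE n hn))).markAux c).1.lang) := by
  have hm : ((PRE.opt (.pos (coreRE n hn))).markAux c).1
      = .opt (((PRE.pos (coreRE n hn)).markAux c).1) := rfl
  rw [hm, lang_opt]
  exact ((idx_pos_core hn c).add IdxFun.one).toDetL

lemma det_rwi_mark (hn : 2 ≤ n) (b : Fin n) (c : Fin n → ℕ) :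
    detL (((rwi n hn b).markAux c).1.lang) := by
  have hsh := rwiBL_shape hn b c
  have hm : ((rwi n hn b).markAux c).1
      = .cat ((rwiBL hn b).markAux c).1
          ((PRE.opt (.pos (coreRE n hn))).markAux ((rwiBL hn b).markAux c).2).1 := rfl
  rw [hm, lang_cat]
  apply detL_mul hsh.nil_not_mem hsh.idxFun.toDetL (detL_opt_pos_core hn _)
  intro s hs
  rw [hsh.flast (A0_not_mem_filter hn b)] at hs
  exact absurd hs (Set.notMem_empty s)

lemma first_rwi_mark (hn : 2 ≤ n) (b : Fin n) (c : Fin n → ℕ) :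
    ∀ s ∈ FirstL (((rwi n hn b).markAux c).1.lang),
      s.1 = A0 hn ∨ (2 ≤ s.1.val ∧ s.1 ≠ b) := by
  intro s hs
  have hsh := rwiBL_shape hn b c
  have hm : ((rwi n hn b).markAux c).1
      = .cat ((rwiBL hn b).markAux c).1
          ((PRE.opt (.pos (coreRE n hn))).markAux ((rwiBL hn b).markAux c).2).1 := rfl
  rw [hm, lang_cat] at hs
  have hs' := FirstL_mul_subset hsh.nil_not_mem hs
  rcases hsh.first s hs' with h | h
  · exact Or.inl h
  · right
    rw [List.mem_filter] at h
    refine ⟨mem_Blist.mp h.1, by simpa using h.2⟩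

lemma det_tail_mark (hn : 2 ≤ n) :
    ∀ (u : List (Fin n)), (∀ x ∈ u, 2 ≤ x.val) → ∀ c : Fin n → ℕ,
      detL (((rexclTail n hn u).markAux c).1.lang) := by
  intro u
  induction u with
  | nil =>
    intro _ c
    exact (idx_pos_core hn c).toDetL
  | cons b rest ih =>
    intro hb c
    have hbv : 2 ≤ b.val := hb b (by simp)
    have hm : ((rexclTail n hn (b :: rest)).markAux c).1
        = .alt .eps (.alt ((rwi n hn b).markAux c).1
            (.cat (.char (b, ((rwi n hn b).markAux c).2 b + 1))
              ((rexclTail n hn rest).markAux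
                (fun a => if a = b then ((rwi n hn b).markAux c).2 b + 1
                  else ((rwi n hn b).markAux c).2 a)).1)) := rfl
    rw [hm, lang_alt, lang_eps]
    refine detL_add detL_one ?_ ?_
    · rw [lang_alt, lang_cat, lang_char]
      refine detL_add (det_rwi_mark hn b c) ?_ ?_
      · refine detL_mul (by rw [lmem_singleton_iff]; simp) (detL_singleton _)
          (ih (fun x hx => hb x (by simp [hx])) _) ?_
        intro s hs
        rw [FLastL_singleton] at hs
        exact absurd hs (Set.notMem_empty s)
      · intro s hs t ht
        have ht' := FirstL_singleton_mul ht
        rw [Set.mem_singleton_iff] at ht'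
        subst ht'
        rcases first_rwi_mark hn b c s hs with h | h
        · intro hc
          have hcb : s.1 = b := hc
          rw [h] at hcb
          have hv := congrArg Fin.val hcb
          simp [A0] at hv
          omega
        · exact fun hc => h.2 hc
    · intro s hs
      rw [FirstL_one] at hs
      exact absurd hs (Set.notMem_empty s)

lemma det_rexcl_mark (hn : 2 ≤ n) (w : List (Fin n)) (hw : ∀ x ∈ w, 2 ≤ x.val)
    (c : Fin n → ℕ) : detL (((rexcl n hn w).markAux c).1.lang) := by
  cases w with
  | nil =>
    have hm : ((rexcl n hn ([] : List (Fin n))).markAux c).1 = .empty := rfl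
    rw [hm]
    intro p v v' a i j h _
    simp [PRE.lang] at h
  | cons b rest =>
    have hbv : 2 ≤ b.val := hw b (by simp)
    have hm : ((rexcl n hn (b :: rest)).markAux c).1
        = .alt ((rwi n hn b).markAux c).1
            (.cat (.char (b, ((rwi n hn b).markAux c).2 b + 1))
              ((rexclTail n hn rest).markAux
                (fun a => if a = b then ((rwi n hn b).markAux c).2 b + 1
                  else ((rwi n hn b).markAux c).2 a)).1) := rfl
    rw [hm, lang_alt, lang_cat, lang_char]
    refine detL_add (det_rwi_mark hn b c) ?_ ?_
    · refine detL_mul (by rw [lmem_singleton_iff]; simp) (detL_singleton _)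
        (det_tail_mark hn rest (fun x hx => hw x (by simp [hx])) _) ?_
      intro s hs
      rw [FLastL_singleton] at hs
      exact absurd hs (Set.notMem_empty s)
    · intro s hs t ht
      have ht' := FirstL_singleton_mul ht
      rw [Set.mem_singleton_iff] at ht'
      subst ht'
      rcases first_rwi_mark hn b c s hs with h | h
      · intro hc
        have hcb : s.1 = b := hc
        rw [h] at hcb
        have hv := congrArg Fin.val hcb
        simp [A0] at hv
        omega
      · exact fun hc => h.2 hc

/-- The expression `rexcl` is deterministic. -/
lemma rexcl_deterministic (hn : 2 ≤ n) (w : List (Fin n)) (hw : ∀ x ∈ w, 2 ≤ x.val) :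
    (rexcl n hn w).Deterministic := by
  intro p v v' a i j hx hy
  exact det_rexcl_mark hn w hw (fun _ => 0) p v v' a i j hx hy

/-! ### The unmarked languages -/

lemma mem_lang_char {β : Type} {w : List β} {a : β} : w ∈ (PRE.char a).lang ↔ w = [a] :=
  Iff.rfl

lemma bigAlt_lang : ∀ (l : List (Fin n)) (w : List (Fin n)),
    w ∈ (bigAlt l).lang ↔ ∃ x ∈ l, w = [x] := by
  intro l
  induction l with
  | nil => intro w; simp [bigAlt, PRE.lang]
  | cons x xs ih =>
    intro w
    cases xs with
    | nil =>
      constructor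
      · intro h
        exact ⟨x, by simp, mem_lang_char.mp h⟩
      · rintro ⟨z, hz, rfl⟩
        have hzx : z = x := by simpa using hz
        subst hzx
        exact mem_lang_char.mpr rfl
    | cons y ys =>
      rw [show bigAlt (x :: y :: ys) = PRE.alt (.char x) (bigAlt (y :: ys)) from rfl,
        lang_alt, Language.mem_add, lang_char, ih]
      constructor
      · rintro (h | ⟨z, hz, rfl⟩)
        · exact ⟨x, by simp, h⟩
        · exact ⟨z, by simp [hz], rfl⟩
      · rintro ⟨z, hz, rfl⟩
        rcases List.mem_cons.mp hz with rfl | hz'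
        · exact Or.inl rfl
        · exact Or.inr ⟨z, hz', rfl⟩

lemma core_lang (hn : 2 ≤ n) (w : List (Fin n)) :
    w ∈ (coreRE n hn).lang ↔ w = [A0 hn, A1 hn] ∨ ∃ b : Fin n, 2 ≤ b.val ∧ w = [b] := by
  rw [coreRE_eq, lang_alt, Language.mem_add, lang_cat, lang_char, lang_char]
  constructor
  · rintro (h | h)
    · rw [Language.mem_mul] at h
      obtain ⟨u, hu, t, ht, rfl⟩ := h
      rw [lmem_singleton_iff] at hu ht
      subst hu; subst ht
      exact Or.inl rfl
    · obtain ⟨z, hz, rfl⟩ := (bigAlt_lang _ _).mp h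
      exact Or.inr ⟨z, mem_Blist.mp hz, rfl⟩
  · rintro (rfl | ⟨b, hb, rfl⟩)
    · left
      rw [Language.mem_mul]
      exact ⟨[A0 hn], rfl, [A1 hn], rfl, rfl⟩
    · right
      exact (bigAlt_lang _ _).mpr ⟨b, mem_Blist.mpr hb, rfl⟩

lemma core_ne_nil (hn : 2 ≤ n) {u : List (Fin n)} (h : u ∈ (coreRE n hn).lang) :
    u ≠ [] := by
  rcases (core_lang hn u).mp h with rfl | ⟨b, _, rfl⟩ <;> simp

lemma r1_lang_eq (hn : 2 ≤ n) :
    (r1 n hn).lang = (coreRE n hn).lang * ((coreRE n hn).lang)∗ := rfl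

lemma r1_intro (hn : 2 ≤ n) {u t : List (Fin n)} (hu : u ∈ (coreRE n hn).lang)
    (ht : t ∈ (r1 n hn).lang ∨ t = []) : u ++ t ∈ (r1 n hn).lang := by
  rw [r1_lang_eq, Language.mem_mul]
  rcases ht with ht | rfl
  · rw [r1_lang_eq, Language.mem_mul] at ht
    obtain ⟨u', hu', m, hm, rfl⟩ := ht
    rw [Language.mem_kstar] at hm
    obtain ⟨Ls, rfl, hLs⟩ := hm
    refine ⟨u, hu, (u' :: Ls).flatten, ?_, by simp⟩
    rw [Language.mem_kstar]
    exact ⟨u' :: Ls, rfl, by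
      intro y hy
      rcases List.mem_cons.mp hy with rfl | hy'
      · exact hu'
      · exact hLs y hy'⟩
  · refine ⟨u, hu, [], ?_, by simp⟩
    rw [Language.mem_kstar]
    exact ⟨[], rfl, by simp⟩

lemma r1_elim (hn : 2 ≤ n) {w : List (Fin n)} (h : w ∈ (r1 n hn).lang) :
    ∃ u t, u ∈ (coreRE n hn).lang ∧ w = u ++ t ∧
      (t ∈ (r1 n hn).lang ∨ t = []) := by
  rw [r1_lang_eq, Language.mem_mul] at h
  obtain ⟨u, hu, m, hm, rfl⟩ := h
  rw [Language.mem_kstar] at hm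
  obtain ⟨Ls, rfl, hLs⟩ := hm
  refine ⟨u, Ls.flatten, hu, rfl, ?_⟩
  clear hu
  induction Ls with
  | nil => simp
  | cons v Ls' ih =>
    left
    have hjc : (v :: Ls').flatten = v ++ Ls'.flatten := rfl
    rw [hjc]
    refine r1_intro hn (hLs v (by simp)) ?_
    exact ih (fun y hy => hLs y (by simp [hy]))

lemma r1_ne_nil (hn : 2 ≤ n) {w : List (Fin n)} (h : w ∈ (r1 n hn).lang) : w ≠ [] := by
  obtain ⟨u, t, hu, rfl, _⟩ := r1_elim hn h
  have := core_ne_nil hn hu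
  simp [this]

lemma r1_cons_intro (hn : 2 ≤ n) {b : Fin n} (hb : 2 ≤ b.val) {t : List (Fin n)}
    (ht : t ∈ (r1 n hn).lang ∨ t = []) : b :: t ∈ (r1 n hn).lang := by
  have : b :: t = [b] ++ t := rfl
  rw [this]
  exact r1_intro hn ((core_lang hn _).mpr (Or.inr ⟨b, hb, rfl⟩)) ht

lemma r1_cons_elim (hn : 2 ≤ n) {b : Fin n} (hb : 2 ≤ b.val) {t : List (Fin n)}
    (h : b :: t ∈ (r1 n hn).lang) : t ∈ (r1 n hn).lang ∨ t = [] := by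
  obtain ⟨u, t', hu, he, ht'⟩ := r1_elim hn h
  rcases (core_lang hn u).mp hu with rfl | ⟨b', hb', rfl⟩
  · exfalso
    have hh := congrArg List.head? he
    simp [A0] at hh
    have := congrArg Fin.val hh
    simp [A0] at this
    omega
  · have : t = t' := by
      have := congrArg List.tail he
      simpa using this
    rw [this]
    exact ht'

lemma B_word_mem_r1 (hn : 2 ≤ n) : ∀ (w : List (Fin n)), w ≠ [] →
    (∀ x ∈ w, 2 ≤ x.val) → w ∈ (r1 n hn).lang := by
  intro w
  induction w with
  | nil => intro h; simp at h
  | cons b rest ih =>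
    intro _ hb
    refine r1_cons_intro hn (hb b (by simp)) ?_
    cases rest with
    | nil => simp
    | cons c rest' =>
      left
      exact ih (by simp) (fun x hx => hb x (by simp [hx]))

lemma rwiBL_lang (hn : 2 ≤ n) (b : Fin n) (w : List (Fin n)) :
    w ∈ (rwiBL hn b).lang ↔
      w = [A0 hn, A1 hn] ∨ ∃ b' : Fin n, 2 ≤ b'.val ∧ b' ≠ b ∧ w = [b'] := by
  rw [rwiBL, lang_alt, Language.mem_add, lang_cat, lang_char, lang_char]
  constructor
  · rintro (h | h)
    · rw [Language.mem_mul] at h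
      obtain ⟨u, hu, t, ht, rfl⟩ := h
      rw [lmem_singleton_iff] at hu ht
      subst hu; subst ht
      exact Or.inl rfl
    · obtain ⟨z, hz, rfl⟩ := (bigAlt_lang _ _).mp h
      rw [List.mem_filter] at hz
      exact Or.inr ⟨z, mem_Blist.mp hz.1, by simpa using hz.2, rfl⟩
  · rintro (rfl | ⟨b', hb', hbb, rfl⟩)
    · left
      rw [Language.mem_mul]
      exact ⟨[A0 hn], rfl, [A1 hn], rfl, rfl⟩
    · right
      refine (bigAlt_lang _ _).mpr ⟨b', ?_, rfl⟩
      rw [List.mem_filter]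
      exact ⟨mem_Blist.mpr hb', by simpa using hbb⟩

lemma rwi_lang (hn : 2 ≤ n) (b : Fin n) (hb : 2 ≤ b.val) (w : List (Fin n)) :
    w ∈ (rwi n hn b).lang ↔ (w ∈ (r1 n hn).lang ∧ ∀ t, w ≠ b :: t) := by
  rw [rwi_eq, lang_cat, lang_opt]
  have hpos : (PRE.pos (coreRE n hn)).lang = (r1 n hn).lang := rfl
  rw [hpos]
  constructor
  · intro h
    rw [Language.mem_mul] at h
    obtain ⟨u, hu, t, ht, rfl⟩ := h
    rw [Language.mem_add, Language.mem_one] at ht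
    rcases (rwiBL_lang hn b u).mp hu with rfl | ⟨b', hb', hbb, rfl⟩
    · constructor
      · exact r1_intro hn ((core_lang hn _).mpr (Or.inl rfl)) ht
      · intro t' hc
        have hh := congrArg List.head? hc
        simp at hh
        have := congrArg Fin.val hh
        simp [A0] at this
        omega
    · constructor
      · exact r1_cons_intro hn hb' ht
      · intro t' hc
        have hh := congrArg List.head? hc
        simp at hh
        exact hbb hh
  · rintro ⟨hw, hnb⟩
    obtain ⟨u, t, hu, rfl, ht⟩ := r1_elim hn hw
    rw [Language.mem_mul]
    refine ⟨u, ?_, t, ?_, rfl⟩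
    · rcases (core_lang hn u).mp hu with rfl | ⟨b', hb', rfl⟩
      · exact (rwiBL_lang hn b _).mpr (Or.inl rfl)
      · refine (rwiBL_lang hn b _).mpr (Or.inr ⟨b', hb', ?_, rfl⟩)
        intro hc
        exact hnb t (by rw [hc]; rfl)
    · rw [Language.mem_add, Language.mem_one]
      exact ht

lemma tail_lang (hn : 2 ≤ n) : ∀ (u : List (Fin n)), (∀ x ∈ u, 2 ≤ x.val) →
    ∀ w, w ∈ (rexclTail n hn u).lang ↔
      ((w ∈ (r1 n hn).lang ∨ w = []) ∧ w ≠ u) := by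
  intro u
  induction u with
  | nil =>
    intro _ w
    rw [show rexclTail n hn [] = r1 n hn from rfl]
    constructor
    · intro h
      exact ⟨Or.inl h, r1_ne_nil hn h⟩
    · rintro ⟨h | rfl, hne⟩
      · exact h
      · exact absurd rfl hne
  | cons b rest ih =>
    intro hb w
    have hbv : 2 ≤ b.val := hb b (by simp)
    have ihr := ih (fun x hx => hb x (by simp [hx]))
    rw [show rexclTail n hn (b :: rest)
        = .alt .eps (.alt (rwi n hn b) (.cat (.char b) (rexclTail n hn rest))) from rfl,
      lang_alt, lang_alt, lang_cat, lang_char, lang_eps, Language.mem_add,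
      Language.mem_add, Language.mem_one]
    constructor
    · rintro (rfl | h | h)
      · exact ⟨Or.inr rfl, by simp⟩
      · obtain ⟨hw, hnb⟩ := (rwi_lang hn b hbv w).mp h
        exact ⟨Or.inl hw, hnb rest⟩
      · rw [Language.mem_mul] at h
        obtain ⟨u', hu', t, ht, rfl⟩ := h
        rw [lmem_singleton_iff] at hu'
        subst hu'
        obtain ⟨ht1, ht2⟩ := (ihr t).mp ht
        refine ⟨Or.inl (r1_cons_intro hn hbv (by tauto)), by simpa using ht2⟩
    · rintro ⟨hw | rfl, hne⟩
      · by_cases hstart : ∃ t, w = b :: t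
        · obtain ⟨t, rfl⟩ := hstart
          right; right
          rw [Language.mem_mul]
          refine ⟨[b], rfl, t, ?_, rfl⟩
          refine (ihr t).mpr ⟨?_, ?_⟩
          · rcases r1_cons_elim hn hbv hw with h | h
            · exact Or.inl h
            · exact Or.inr h
          · intro hc
            exact hne (by rw [hc])
        · right; left
          exact (rwi_lang hn b hbv w).mpr ⟨hw, fun t hc => hstart ⟨t, hc⟩⟩
      · exact Or.inl rfl

lemma rexcl_lang (hn : 2 ≤ n) (u : List (Fin n)) (hu : ∀ x ∈ u, 2 ≤ x.val)
    (hne : u ≠ []) (w : List (Fin n)) :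
    w ∈ (rexcl n hn u).lang ↔ (w ∈ (r1 n hn).lang ∧ w ≠ u) := by
  cases u with
  | nil => exact absurd rfl hne
  | cons b rest =>
    have hbv : 2 ≤ b.val := hu b (by simp)
    have ihr := tail_lang hn rest (fun x hx => hu x (by simp [hx]))
    rw [show rexcl n hn (b :: rest)
        = .alt (rwi n hn b) (.cat (.char b) (rexclTail n hn rest)) from rfl,
      lang_alt, lang_cat, lang_char, Language.mem_add]
    constructor
    · rintro (h | h)
      · obtain ⟨hw, hnb⟩ := (rwi_lang hn b hbv w).mp h
        exact ⟨hw, hnb rest⟩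
      · rw [Language.mem_mul] at h
        obtain ⟨u', hu', t, ht, rfl⟩ := h
        rw [lmem_singleton_iff] at hu'
        subst hu'
        obtain ⟨ht1, ht2⟩ := (ihr t).mp ht
        exact ⟨r1_cons_intro hn hbv (by tauto), by simpa using ht2⟩
    · rintro ⟨hw, hne'⟩
      by_cases hstart : ∃ t, w = b :: t
      · obtain ⟨t, rfl⟩ := hstart
        right
        rw [Language.mem_mul]
        refine ⟨[b], rfl, t, ?_, rfl⟩
        refine (ihr t).mpr ⟨?_, ?_⟩
        · rcases r1_cons_elim hn hbv hw with h | h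
          · exact Or.inl h
          · exact Or.inr h
        · intro hc
          exact hne' (by rw [hc])
      · left
        exact (rwi_lang hn b hbv w).mpr ⟨hw, fun t hc => hstart ⟨t, hc⟩⟩

/-! ### Occurrence bounds -/

lemma rep_bigAlt_not_mem : ∀ (l : List (Fin n)) (a : Fin n), a ∉ l →
    (bigAlt l).rep a = 0 := by
  intro l
  induction l with
  | nil => intro a _; rfl
  | cons x xs ih =>
    intro a ha
    cases xs with
    | nil =>
      have : x ≠ a := fun hc => ha (by simp [hc])
      simp [bigAlt, PRE.rep, this]
    | cons y ys =>
      have hxa : x ≠ a := fun hc => ha (by simp [hc])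
      rw [show bigAlt (x :: y :: ys) = PRE.alt (.char x) (bigAlt (y :: ys)) from rfl]
      show (if x = a then 1 else 0) + (bigAlt (y :: ys)).rep a = 0
      rw [if_neg hxa, ih a (fun hc => ha (by simp [hc]))]

lemma rep_bigAlt_le_one : ∀ (l : List (Fin n)), l.Nodup → ∀ (a : Fin n),
    (bigAlt l).rep a ≤ 1 := by
  intro l
  induction l with
  | nil => intro _ a; exact Nat.zero_le 1
  | cons x xs ih =>
    intro hnd a
    cases xs with
    | nil =>
      show (if x = a then 1 else 0) ≤ 1
      split <;> omega
    | cons y ys =>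
      rw [show bigAlt (x :: y :: ys) = PRE.alt (.char x) (bigAlt (y :: ys)) from rfl]
      show (if x = a then 1 else 0) + (bigAlt (y :: ys)).rep a ≤ 1
      by_cases hxa : x = a
      · subst hxa
        rw [rep_bigAlt_not_mem (y :: ys) x (List.nodup_cons.mp hnd).1]
        simp
      · rw [if_neg hxa]
        simpa using ih (List.nodup_cons.mp hnd).2 a

/-- Occurrence bound for block expressions (core and rwi-blocks). -/
lemma rep_block_le_one (hn : 2 ≤ n) (l : List (Fin n)) (hnd : l.Nodup)
    (hl : ∀ x ∈ l, 2 ≤ x.val) (a : Fin n) :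
    (PRE.alt (.cat (.char (A0 hn)) (.char (A1 hn))) (bigAlt l)).rep a ≤ 1 := by
  show ((if A0 hn = a then 1 else 0) + (if A1 hn = a then 1 else 0)) + (bigAlt l).rep a ≤ 1
  by_cases h0 : A0 hn = a
  · have h1 : A1 hn ≠ a := fun hc => A1_ne_A0 hn (hc.trans h0.symm)
    have hal : a ∉ l := by
      intro hc
      have := hl a hc
      rw [← h0] at this
      simp [A0] at this
    rw [if_pos h0, if_neg h1, rep_bigAlt_not_mem l a hal]
  · by_cases h1 : A1 hn = a
    · have hal : a ∉ l := by
        intro hc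
        have := hl a hc
        rw [← h1] at this
        simp [A1] at this
      rw [if_pos h1, if_neg h0, rep_bigAlt_not_mem l a hal]
    · rw [if_neg h0, if_neg h1]
      simpa using rep_bigAlt_le_one l hnd a

lemma rep_core_le_one (hn : 2 ≤ n) (a : Fin n) : (coreRE n hn).rep a ≤ 1 := by
  rw [coreRE_eq]
  exact rep_block_le_one hn (Blist n) Blist_nodup (fun x hx => mem_Blist.mp hx) a

lemma rep_rwi_level (hn : 2 ≤ n) (b : Fin n) (hb : 2 ≤ b.val) (a : Fin n) :
    (rwi n hn b).rep a + (if b = a then 1 else 0) ≤ 2 := by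
  have hrwi : (rwi n hn b).rep a = (rwiBL hn b).rep a + (coreRE n hn).rep a := rfl
  rw [hrwi]
  have hcore := rep_core_le_one hn a
  by_cases hba : b = a
  · subst hba
    have h0 : A0 hn ≠ b := by
      intro hc
      have := congrArg Fin.val hc
      simp [A0] at this
      omega
    have h1 : A1 hn ≠ b := by
      intro hc
      have := congrArg Fin.val hc
      simp [A1] at this
      omega
    have hbl : b ∉ (Blist n).filter (· ≠ b) := by
      intro hc
      rw [List.mem_filter] at hc
      simp at hc
    have hBL : (rwiBL hn b).rep b = 0 := by
      show ((if A0 hn = b then 1 else 0) + (if A1 hn = b then 1 else 0))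
          + (bigAlt ((Blist n).filter (· ≠ b))).rep b = 0
      rw [if_neg h0, if_neg h1, rep_bigAlt_not_mem _ b hbl]
    rw [hBL, if_pos rfl]
    omega
  · have hBL : (rwiBL hn b).rep a ≤ 1 := by
      rw [rwiBL]
      refine rep_block_le_one hn _ (Blist_nodup.filter _) ?_ a
      exact fun x hx => mem_Blist.mp (List.mem_of_mem_filter hx)
    rw [if_neg hba]
    omega

lemma rep_tail_le (hn : 2 ≤ n) : ∀ (u : List (Fin n)), (∀ x ∈ u, 2 ≤ x.val) →
    ∀ a : Fin n, (rexclTail n hn u).rep a ≤ 2 * u.length + 1 := by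
  intro u
  induction u with
  | nil =>
    intro _ a
    have : (rexclTail n hn []).rep a = (coreRE n hn).rep a := rfl
    rw [this]
    simpa using rep_core_le_one hn a
  | cons b rest ih =>
    intro hb a
    have hbv : 2 ≤ b.val := hb b (by simp)
    have hr : (rexclTail n hn (b :: rest)).rep a
        = 0 + ((rwi n hn b).rep a + ((if b = a then 1 else 0)
          + (rexclTail n hn rest).rep a)) := rfl
    rw [hr]
    have h1 := rep_rwi_level hn b hbv a
    have h2 := ih (fun x hx => hb x (by simp [hx])) a
    simp only [List.length_cons]
    omega

lemma rep_rexcl_le (hn : 2 ≤ n) (u : List (Fin n)) (hu : ∀ x ∈ u, 2 ≤ x.val)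
    (a : Fin n) : (rexcl n hn u).rep a ≤ 2 * u.length + 1 := by
  cases u with
  | nil =>
    have h0 : (rexcl n hn ([] : List (Fin n))).rep a = 0 := rfl
    rw [h0]
    omega
  | cons b rest =>
    have hbv : 2 ≤ b.val := hu b (by simp)
    have hr : (rexcl n hn (b :: rest)).rep a
        = (rwi n hn b).rep a + ((if b = a then 1 else 0)
          + (rexclTail n hn rest).rep a) := rfl
    rw [hr]
    have h1 := rep_rwi_level hn b hbv a
    have h2 := rep_tail_le hn rest (fun x hx => hu x (by simp [hx])) a
    simp only [List.length_cons]
    omega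

/-! ### Counting words over B -/

/-- Embedding of `Fin (n-2)` as the letters of `B`. -/
def embB (n : ℕ) (x : Fin (n - 2)) : Fin n := ⟨x.val + 2, by have := x.isLt; omega⟩

lemma embB_injective : Function.Injective (embB n) := by
  intro x y h
  have := congrArg Fin.val h
  simp [embB] at this
  exact Fin.ext this

/-- The words of length `i` over `B`. -/
def wordsLen (n i : ℕ) : Finset (List (Fin n)) :=
  Finset.image (fun g : Fin i → Fin (n - 2) => (List.ofFn g).map (embB n)) Finset.univ

lemma card_wordsLen (n i : ℕ) : (wordsLen n i).card = (n - 2) ^ i := by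
  rw [wordsLen, Finset.card_image_of_injective]
  · simp
  · intro f g h
    have := List.map_injective_iff.mpr embB_injective h
    exact List.ofFn_injective this

lemma mem_wordsLen_length {i : ℕ} {w : List (Fin n)} (h : w ∈ wordsLen n i) :
    w.length = i := by
  rw [wordsLen, Finset.mem_image] at h
  obtain ⟨g, _, rfl⟩ := h
  simp

lemma mem_wordsLen_letters {i : ℕ} {w : List (Fin n)} (h : w ∈ wordsLen n i) :
    ∀ b ∈ w, 2 ≤ b.val := by
  rw [wordsLen, Finset.mem_image] at h
  obtain ⟨g, _, rfl⟩ := h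
  intro b hb
  rw [List.mem_map] at hb
  obtain ⟨x, _, rfl⟩ := hb
  simp [embB]

lemma all_words_mem {i : ℕ} (w : List (Fin n)) (hlen : w.length = i)
    (hb : ∀ b ∈ w, 2 ≤ b.val) : w ∈ wordsLen n i := by
  rw [wordsLen, Finset.mem_image]
  subst hlen
  refine ⟨fun k => ⟨(w.get k).val - 2, by have := hb (w.get k) (List.get_mem w k); have := (w.get k).isLt; omega⟩,
    Finset.mem_univ _, ?_⟩
  apply List.ext_getElem
  · simp
  · intro k h1 h2
    simp only [List.getElem_map, List.getElem_ofFn, embB]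
    have hbk := hb w[k] (List.getElem_mem h2)
    ext
    simp
    omega

lemma count_words {S : Finset (List (Fin n))} (hS : ∀ w : List (Fin n), w ≠ [] → w.length ≤ n →
    (∀ b ∈ w, 2 ≤ b.val) → w ∈ S) :
    ∑ i ∈ Finset.Icc 1 n, (n - 2) ^ i ≤ S.card := by
  have hsub : (Finset.Icc 1 n).biUnion (wordsLen n) ⊆ S := by
    intro w hw
    rw [Finset.mem_biUnion] at hw
    obtain ⟨i, hi, hwi⟩ := hw
    rw [Finset.mem_Icc] at hi
    have hlen := mem_wordsLen_length hwi
    refine hS w ?_ (by omega) (mem_wordsLen_letters hwi)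
    intro hc
    rw [hc] at hlen
    simp at hlen
    omega
  have hdisj : ∀ i ∈ Finset.Icc 1 n, ∀ j ∈ Finset.Icc 1 n, i ≠ j →
      Disjoint (wordsLen n i) (wordsLen n j) := by
    intro i _ j _ hij
    rw [Finset.disjoint_left]
    intro w hwi hwj
    exact hij ((mem_wordsLen_length hwi).symm.trans (mem_wordsLen_length hwj))
  calc ∑ i ∈ Finset.Icc 1 n, (n - 2) ^ i
      = ∑ i ∈ Finset.Icc 1 n, (wordsLen n i).card := by
        refine Finset.sum_congr rfl fun i _ => (card_wordsLen n i).symm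
    _ = ((Finset.Icc 1 n).biUnion (wordsLen n)).card := (Finset.card_biUnion hdisj).symm
    _ ≤ S.card := Finset.card_le_card hsub

end Stmt9Aux

/-- If M learns the class of deterministic (2n+3)-OREs over A = {a₁,…,aₙ} (n ≥ 3),
then every characteristic sample S for r₁ = (a₁a₂ + a₃ + ⋯ + aₙ)⁺ contains all
non-empty words of length at most n over B = A ∖ {a₁,a₂}; hence
|S| ≥ Σ_{i=1}^{n} (n−2)^i. -/
theorem stmt9 (n : ℕ) (hn : 3 ≤ n)
    (M : Finset (List (Fin n)) → PRE (Fin n))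
    (hM : Learns M {r : PRE (Fin n) | r.Deterministic ∧ PRE.IsKORE (2 * n + 3) r})
    (S : Finset (List (Fin n)))
    (hsub : ∀ w ∈ S, w ∈ (r1 n (by omega)).lang)
    (hchar : ∀ S' : Finset (List (Fin n)), S ⊆ S' →
      (∀ w ∈ S', w ∈ (r1 n (by omega)).lang) →
      (M S').lang = (r1 n (by omega)).lang) :
    (∀ w : List (Fin n), w ≠ [] → w.length ≤ n → (∀ b ∈ w, 2 ≤ (b : ℕ)) → w ∈ S) ∧
    ∑ i ∈ Finset.Icc 1 n, (n - 2) ^ i ≤ S.card := by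
  have h2 : 2 ≤ n := by omega
  have hpart1 : ∀ w : List (Fin n), w ≠ [] → w.length ≤ n →
      (∀ b ∈ w, 2 ≤ (b : ℕ)) → w ∈ S := by
    intro w hne hlen hB
    by_contra hws
    -- the excluding expression is a deterministic (2n+3)-ORE
    have hdet := Stmt9Aux.rexcl_deterministic h2 w hB
    have hkore : PRE.IsKORE (2 * n + 3) (rexcl n h2 w) := by
      intro a
      have := Stmt9Aux.rep_rexcl_le h2 w hB a
      omega
    obtain ⟨Sr, hSr1, hSr2⟩ := hM.2 (rexcl n h2 w) ⟨hdet, hkore⟩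
    have hwr1 : w ∈ (r1 n h2).lang := Stmt9Aux.B_word_mem_r1 h2 w hne hB
    have hS'r1 : ∀ u ∈ S ∪ Sr, u ∈ (r1 n h2).lang := by
      intro u hu
      rcases Finset.mem_union.mp hu with h | h
      · exact hsub u h
      · exact ((Stmt9Aux.rexcl_lang h2 w hB hne u).mp (hSr1 u h)).1
    have hS'rw : ∀ u ∈ S ∪ Sr, u ∈ (rexcl n h2 w).lang := by
      intro u hu
      rcases Finset.mem_union.mp hu with h | h
      · refine (Stmt9Aux.rexcl_lang h2 w hB hne u).mpr ⟨hsub u h, ?_⟩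
        rintro rfl
        exact hws h
      · exact hSr1 u h
    have e1 := hchar (S ∪ Sr) Finset.subset_union_left hS'r1
    have e2 := hSr2 (S ∪ Sr) Finset.subset_union_right hS'rw
    have hmem : w ∈ (rexcl n h2 w).lang := by
      rw [← e2, e1]
      exact hwr1
    exact ((Stmt9Aux.rexcl_lang h2 w hB hne w).mp hmem).2 rfl
  exact ⟨hpart1, Stmt9Aux.count_words hpart1⟩
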